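/- arXiv:1511.01148 — 3 statements merged into one kernel-verified Lean document; each statement's English description precedes it below -/
import Mathlib

section
/- For each natural number n, the number of monic square-free polynomials of degree n ≥ 2 in F_q[T] equals q^n (1 - 1/q). -/
open Polynomial Filter Asymptotics
open scoped Classical

variable {Fq : Type} [Field Fq] [Fintype Fq]

/-- Norm of a polynomial: `|f| = q^(deg f)` for `f ≠ 0`, and `|0| = 0`. -/
noncomputable def pnorm (f : Polynomial Fq) : ℝ :=
  if f = 0 then 0 else (Fintype.card Fq : ℝ) ^ f.natDegree

/-- Monic polynomials of degree `n`. -/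
def monicDeg (Fq : Type) [Field Fq] (n : ℕ) : Set (Polynomial Fq) :=
  {f | f.Monic ∧ f.natDegree = n}

/-- `H_{2g+1}`: monic square-free polynomials of degree `2g+1`. -/
def Hset (Fq : Type) [Field Fq] (g : ℕ) : Set (Polynomial Fq) :=
  {D | D.Monic ∧ Squarefree D ∧ D.natDegree = 2 * g + 1}

/-- Quadratic residue symbol `(D/P)` for an irreducible `P`. -/
noncomputable def quadCharP (D P : Polynomial Fq) : ℤ :=
  if P ∣ D then 0 else if ∃ x : Polynomial Fq, P ∣ (x ^ 2 - D) then 1 else -1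

/-- Jacobi-type quadratic residue symbol `(D/n)`, extended multiplicatively over
irreducible factors of `n`. -/
noncomputable def jacobi (D n : Polynomial Fq) : ℤ :=
  ((UniqueFactorizationMonoid.factors n).map (quadCharP D)).prod

/-- The quadratic Dirichlet L-function `L(s, χ_D)` as a finite sum
`Σ_{n=0}^{deg D - 1} (Σ_{f monic, deg f = n} χ_D(f)) q^{-ns}`. -/
noncomputable def Lfun (D : Polynomial Fq) (s : ℂ) : ℂ :=
  ∑ n ∈ Finset.range D.natDegree,
    (∑ᶠ f ∈ monicDeg Fq n, (jacobi D f : ℂ)) * (Fintype.card Fq : ℂ) ^ (-(n : ℂ) * s)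

/-- The central value `L(1/2, χ_D)` as a real number. -/
noncomputable def LhalfR (D : Polynomial Fq) : ℝ :=
  ∑ n ∈ Finset.range D.natDegree,
    (∑ᶠ f ∈ monicDeg Fq n, (jacobi D f : ℝ)) * (Real.sqrt (Fintype.card Fq))⁻¹ ^ n

/-- `a_m = Π_{P | m} |P|/(|P|+1)` over monic irreducible divisors `P` of `m`. -/
noncomputable def am (m : Polynomial Fq) : ℝ :=
  ∏ᶠ (P : Polynomial Fq) (_ : P.Monic ∧ Irreducible P ∧ P ∣ m), pnorm P / (pnorm P + 1)

/-- `d_k(m)`: the number of ordered `k`-tuples of monic polynomials with product `m`. -/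
noncomputable def dfold (k : ℕ) (m : Polynomial Fq) : ℕ :=
  Nat.card {t : Fin k → Polynomial Fq // (∀ i, (t i).Monic) ∧ ∏ i, t i = m}

/-- Möbius function on `F_q[T]`. -/
noncomputable def moebiusP (f : Polynomial Fq) : ℤ :=
  if Squarefree f then (-1) ^ (UniqueFactorizationMonoid.factors f).card else 0

/-- The Dirichlet polynomial `A(D) = Σ_{n monic, deg n ≤ 4g/(15k)} χ_D(n)/√|n|`. -/
noncomputable def AD (k g : ℕ) (D : Polynomial Fq) : ℝ :=
  ∑ᶠ n ∈ {n : Polynomial Fq | n.Monic ∧ n.natDegree ≤ 4 * g / (15 * k)},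
    (jacobi D n : ℝ) / Real.sqrt (pnorm n)
namespace CMSaux
variable {Fq : Type} [Field Fq] [Fintype Fq]

instance finite_monic (n : ℕ) : Finite {f : Polynomial Fq // f.Monic ∧ f.natDegree = n} :=
  Finite.of_equiv _ ((monicEquivDegreeLT n).trans (degreeLTEquiv Fq n).toEquiv).symm

lemma card_monic (n : ℕ) :
    Nat.card {f : Polynomial Fq // f.Monic ∧ f.natDegree = n} = Fintype.card Fq ^ n := by
  rw [Nat.card_congr ((monicEquivDegreeLT n).trans (degreeLTEquiv Fq n).toEquiv)]
  simp [Nat.card_eq_fintype_card]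

lemma exists_decomp_aux : ∀ n (f : Polynomial Fq), f.natDegree = n → f.Monic →
    ∃ a b : Polynomial Fq, a.Monic ∧ b.Monic ∧ Squarefree b ∧ f = b * a ^ 2 := by
  intro n
  induction n using Nat.strong_induction_on with
  | _ n ih =>
  intro f hn hf
  subst hn
  by_cases hsf : Squarefree f
  · exact ⟨1, f, monic_one, hf, hsf, by simp⟩
  · rw [Squarefree] at hsf
    push_neg at hsf
    obtain ⟨x, hx2, hxu⟩ := hsf
    have hx0 : x ≠ 0 := by
      rintro rfl
      rw [mul_zero, zero_dvd_iff] at hx2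
      exact hf.ne_zero hx2
    have hl : x.leadingCoeff ≠ 0 := leadingCoeff_ne_zero.2 hx0
    set c := x * C (x.leadingCoeff)⁻¹ with hc
    have hcm : c.Monic := monic_mul_leadingCoeff_inv hx0
    have hcu : ¬ IsUnit c := by
      intro h
      exact hxu (isUnit_of_mul_isUnit_left h)
    have hcd : c * c ∣ f := by
      refine dvd_trans ?_ hx2
      refine ⟨C (x.leadingCoeff) * C (x.leadingCoeff), ?_⟩
      rw [hc]
      ring_nf
      rw [mul_assoc, ← mul_pow, ← C_mul, inv_mul_cancel₀ hl, C_1, one_pow, mul_one]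
    obtain ⟨g, hg⟩ := hcd
    have hgm : g.Monic := (hcm.mul hcm).of_mul_monic_left (hg ▸ hf)
    have hcdeg : 1 ≤ c.natDegree := by
      rcases Nat.eq_zero_or_pos c.natDegree with h | h
      · exact absurd (hcm.isUnit_iff.2 ((hcm.natDegree_eq_zero).1 h)) hcu
      · exact h
    have hdeg : f.natDegree = c.natDegree + c.natDegree + g.natDegree := by
      rw [hg, (hcm.mul hcm).natDegree_mul hgm, hcm.natDegree_mul hcm]
    obtain ⟨a, b, ham, hbm, hbs, hab⟩ := ih g.natDegree (by omega) g rfl hgm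
    exact ⟨c * a, b, hcm.mul ham, hbm, hbs, by rw [hg, hab]; ring⟩

lemma exists_monic_irreducible_factor (a : Polynomial Fq) (ha : a.Monic) (h1 : a ≠ 1) :
    ∃ p : Polynomial Fq, p.Monic ∧ Irreducible p ∧ p ∣ a := by
  obtain ⟨q, hqi, hqd⟩ := WfDvdMonoid.exists_irreducible_factor
    (by rw [ha.isUnit_iff]; exact h1) ha.ne_zero
  have hq0 : q ≠ 0 := hqi.ne_zero
  refine ⟨q * C (q.leadingCoeff)⁻¹, monic_mul_leadingCoeff_inv hq0, ?_, ?_⟩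
  · refine (Associated.irreducible ?_ hqi)
    exact (associated_mul_isUnit_right_iff (isUnit_C.2 (isUnit_iff_ne_zero.2
      (inv_ne_zero (leadingCoeff_ne_zero.2 hq0))))).2 (Associated.refl q)
  · exact dvd_trans ⟨C q.leadingCoeff, by
      rw [mul_assoc, ← C_mul, inv_mul_cancel₀ (leadingCoeff_ne_zero.2 hq0), C_1, mul_one]⟩ hqd

lemma decomp_unique (a1 a2 b1 b2 : Polynomial Fq) (ha1 : a1.Monic) (ha2 : a2.Monic)
    (hb1 : b1.Monic) (hb2 : b2.Monic) (hs1 : Squarefree b1) (hs2 : Squarefree b2)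
    (heq : b1 * a1 ^ 2 = b2 * a2 ^ 2) : a1 = a2 := by
  have key : ∀ n (a1 a2 b1 b2 : Polynomial Fq), a1.natDegree = n → a1.Monic → a2.Monic →
      b1.Monic → b2.Monic → Squarefree b1 → Squarefree b2 →
      b1 * a1 ^ 2 = b2 * a2 ^ 2 → a2 ∣ a1 := by
    intro n
    induction n using Nat.strong_induction_on with
    | _ n ih =>
    intro a1 a2 b1 b2 hn ha1 ha2 hb1 hb2 hs1 hs2 heq
    by_cases h2 : a2 = 1
    · simp [h2]
    -- a2 has a monic irreducible factor p
    obtain ⟨p, hpm, hpi, hpa2⟩ := exists_monic_irreducible_factor a2 ha2 h2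
    have hpp : Prime p := hpi.prime
    -- p ∣ a1
    have hpa1 : p ∣ a1 := by
      by_contra hnd
      have hp2 : p ^ 2 ∣ b1 * a1 ^ 2 := heq ▸ Dvd.dvd.mul_left (pow_dvd_pow_of_dvd hpa2 2) b2
      have hpna : ¬ p ∣ a1 ^ 2 := fun h => hnd (hpp.dvd_of_dvd_pow h)
      have hpb : p ∣ b1 := by
        have : p ∣ b1 * a1 ^ 2 := dvd_trans (dvd_pow_self p two_ne_zero) hp2
        exact (hpp.dvd_mul.1 this).resolve_right hpna
      obtain ⟨t, ht⟩ := hpb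
      have hpt : p ∣ t := by
        have h' : p * p ∣ p * (t * a1 ^ 2) := by
          have := hp2
          rw [ht] at this
          rw [pow_two] at this
          rwa [mul_assoc] at this
        have := (mul_dvd_mul_iff_left (hpp.ne_zero)).1 h'
        exact (hpp.dvd_mul.1 this).resolve_right hpna
      obtain ⟨s, hsx⟩ := hpt
      exact hpp.not_unit (hs1 p ⟨s, by rw [ht, hsx]; ring⟩)
    obtain ⟨c1, hc1⟩ := hpa1
    obtain ⟨c2, hc2⟩ := hpa2
    have hc1m : c1.Monic := hpm.of_mul_monic_left (hc1 ▸ ha1)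
    have hc2m : c2.Monic := hpm.of_mul_monic_left (hc2 ▸ ha2)
    have hpdeg : 1 ≤ p.natDegree := by
      rcases Nat.eq_zero_or_pos p.natDegree with h | h
      · exact absurd (hpm.isUnit_iff.2 (hpm.natDegree_eq_zero.1 h)) hpi.not_isUnit
      · exact h
    have heq' : b1 * c1 ^ 2 = b2 * c2 ^ 2 := by
      have h' : p ^ 2 * (b1 * c1 ^ 2) = p ^ 2 * (b2 * c2 ^ 2) := by
        rw [hc1, hc2] at heq
        linear_combination heq
      exact mul_left_cancel₀ (pow_ne_zero 2 hpp.ne_zero) h'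
    have hdlt : c1.natDegree < n := by
      have : a1.natDegree = p.natDegree + c1.natDegree := by
        rw [hc1, hpm.natDegree_mul hc1m]
      omega
    have := ih c1.natDegree hdlt c1 c2 b1 b2 rfl hc1m hc2m hb1 hb2 hs1 hs2 heq'
    rw [hc1, hc2]
    exact mul_dvd_mul_left p this
  have d1 : a2 ∣ a1 := key a1.natDegree a1 a2 b1 b2 rfl ha1 ha2 hb1 hb2 hs1 hs2 heq
  have d2 : a1 ∣ a2 := key a2.natDegree a2 a1 b2 b1 rfl ha2 ha1 hb2 hb1 hs2 hs1 heq.symm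
  exact Polynomial.eq_of_monic_of_associated ha1 ha2 (associated_of_dvd_dvd d2 d1)

noncomputable def S (Fq : Type) [Field Fq] (m : ℕ) : ℕ :=
  Nat.card {f : Polynomial Fq // f.Monic ∧ Squarefree f ∧ f.natDegree = m}

instance finite_sf (m : ℕ) :
    Finite {f : Polynomial Fq // f.Monic ∧ Squarefree f ∧ f.natDegree = m} :=
  Finite.of_injective
    (fun x => (⟨x.1, x.2.1, x.2.2.2⟩ : {f : Polynomial Fq // f.Monic ∧ f.natDegree = m}))
    (by intro x y h
        have h2 := congrArg
          (fun z : {f : Polynomial Fq // f.Monic ∧ f.natDegree = m} => z.1) h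
        exact Subtype.ext h2)

abbrev Tt (Fq : Type) [Field Fq] (n : ℕ) : Type :=
  Σ k : Fin (n / 2 + 1),
    ({b : Polynomial Fq // b.Monic ∧ Squarefree b ∧ b.natDegree = n - 2 * (k : ℕ)} ×
     {a : Polynomial Fq // a.Monic ∧ a.natDegree = (k : ℕ)})

noncomputable def Psi (n : ℕ) (t : Tt Fq n) : {f : Polynomial Fq // f.Monic ∧ f.natDegree = n} :=
  ⟨t.2.1.1 * t.2.2.1 ^ 2, t.2.1.2.1.mul (t.2.2.2.1.pow 2), by
    have hk := t.1.2
    have hb := t.2.1.2.2.2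
    have ha := t.2.2.2.2
    rw [Monic.natDegree_mul t.2.1.2.1 (t.2.2.2.1.pow 2), natDegree_pow, ha, hb]
    omega⟩

lemma Psi_bij (n : ℕ) : Function.Bijective (Psi (Fq := Fq) n) := by
  constructor
  · rintro ⟨k1, b1, a1⟩ ⟨k2, b2, a2⟩ h
    have h' : b1.1 * a1.1 ^ 2 = b2.1 * a2.1 ^ 2 := congrArg Subtype.val h
    have ha : a1.1 = a2.1 :=
      decomp_unique a1.1 a2.1 b1.1 b2.1 a1.2.1 a2.2.1 b1.2.1 b2.2.1 b1.2.2.1 b2.2.2.1 h'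
    have hk : k1 = k2 := Fin.ext (by rw [← a1.2.2, ← a2.2.2, ha])
    subst hk
    have hb : b1.1 = b2.1 := by
      have := h'
      rw [ha] at this
      exact mul_right_cancel₀ (pow_ne_zero 2 a2.2.1.ne_zero) this
    have hpair : (⟨b1, a1⟩ : _ × _) = ⟨b2, a2⟩ :=
      Prod.ext (Subtype.ext hb) (Subtype.ext ha)
    exact Sigma.ext rfl (heq_of_eq hpair)
  · rintro ⟨f, hfm, hfd⟩
    obtain ⟨a, b, ham, hbm, hbs, hab⟩ := exists_decomp_aux f.natDegree f rfl hfm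
    have hd : n = b.natDegree + 2 * a.natDegree := by
      rw [← hfd, hab, Monic.natDegree_mul hbm (ham.pow 2), natDegree_pow]
    refine ⟨⟨⟨a.natDegree, by omega⟩, ⟨b, hbm, hbs, by simp; omega⟩, ⟨a, ham, rfl⟩⟩, ?_⟩
    exact Subtype.ext hab.symm

lemma key (n : ℕ) :
    Fintype.card Fq ^ n
      = ∑ k ∈ Finset.range (n / 2 + 1), S Fq (n - 2 * k) * Fintype.card Fq ^ k := by
  classical
  have h1 : Nat.card {f : Polynomial Fq // f.Monic ∧ f.natDegree = n} = Nat.card (Tt Fq n) :=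
    (Nat.card_eq_of_bijective _ (Psi_bij n)).symm
  rw [card_monic] at h1
  rw [h1]
  letI I1 : ∀ k : Fin (n / 2 + 1),
      Fintype {b : Polynomial Fq // b.Monic ∧ Squarefree b ∧ b.natDegree = n - 2 * (k : ℕ)} :=
    fun _ => Fintype.ofFinite _
  letI I2 : ∀ k : Fin (n / 2 + 1),
      Fintype {a : Polynomial Fq // a.Monic ∧ a.natDegree = (k : ℕ)} :=
    fun _ => Fintype.ofFinite _
  rw [Nat.card_eq_fintype_card, Fintype.card_sigma]
  rw [← Fin.sum_univ_eq_sum_range (fun k => S Fq (n - 2 * k) * Fintype.card Fq ^ k)]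
  congr 1
  funext k
  rw [← Nat.card_eq_fintype_card, Nat.card_prod, S, card_monic]

end CMSaux

open CMSaux in
lemma final_count (n : ℕ) (hn : 2 ≤ n) {Fq : Type} [Field Fq] [Fintype Fq] :
    S Fq n + Fintype.card Fq ^ (n - 1) = Fintype.card Fq ^ n := by
  have k1 := key (Fq := Fq) n
  have k2 := key (Fq := Fq) (n - 2)
  have hhalf : n / 2 = (n - 2) / 2 + 1 := by omega
  rw [hhalf, Finset.sum_range_succ'] at k1
  simp only [Nat.mul_zero, Nat.sub_zero, pow_zero, mul_one] at k1
  have hterm : ∀ k, S Fq (n - 2 * (k + 1)) * Fintype.card Fq ^ (k + 1)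
      = (S Fq (n - 2 - 2 * k) * Fintype.card Fq ^ k) * Fintype.card Fq := by
    intro k
    have he : n - 2 * (k + 1) = n - 2 - 2 * k := by omega
    rw [he, pow_succ, mul_assoc]
  simp only [hterm] at k1
  rw [← Finset.sum_mul, ← k2] at k1
  rw [← pow_succ] at k1
  have : n - 2 + 1 = n - 1 := by omega
  rw [this] at k1
  omega



open CMSaux in
/-- the number of monic square-free polynomials of degree `n ≥ 2`
equals `q^n (1 - 1/q)`. -/
theorem card_monic_squarefree (n : ℕ) (hn : 2 ≤ n) :
    (Set.ncard {f : Polynomial Fq | f.Monic ∧ Squarefree f ∧ f.natDegree = n} : ℝ)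
      = (Fintype.card Fq : ℝ) ^ n * (1 - 1 / (Fintype.card Fq : ℝ)) := by

  have h := final_count n hn (Fq := Fq)
  have hs : {f : Polynomial Fq | f.Monic ∧ Squarefree f ∧ f.natDegree = n}.ncard
      = CMSaux.S Fq n := by
    rw [← Nat.card_coe_set_eq]; rfl
  rw [hs]
  have hq0 : (Fintype.card Fq : ℝ) ≠ 0 := Nat.cast_ne_zero.2 Fintype.card_ne_zero
  have hcast : (CMSaux.S Fq n : ℝ) + (Fintype.card Fq : ℝ) ^ (n - 1)
      = (Fintype.card Fq : ℝ) ^ n := by exact_mod_cast congrArg (Nat.cast : ℕ → ℝ) h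
  have hpow : (Fintype.card Fq : ℝ) ^ n
      = (Fintype.card Fq : ℝ) ^ (n - 1) * (Fintype.card Fq : ℝ) := by
    rw [← pow_succ]; congr 1; omega
  have hS : (CMSaux.S Fq n : ℝ)
      = (Fintype.card Fq : ℝ) ^ n - (Fintype.card Fq : ℝ) ^ (n - 1) := by linarith
  rw [hS, hpow]
  field_simp
end

section
/- (Prime polynomial theorem) The number π_A(n) of monic irreducible polynomials of degree n in F_q[T] satisfies π_A(n) = q^n/n + O(q^{n/2}/n), where the implied constant is absolute. -/
open Polynomial Filter Asymptotics
open scoped Classical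

variable {Fq : Type} [Field Fq] [Fintype Fq]

namespace PPT

/-- `q^d - 1 ∣ q^n - 1` implies `d ∣ n` for `q ≥ 2`. -/
lemma dvd_of_pow_sub_one_dvd {q d n : ℕ} (hq : 2 ≤ q) (h : q ^ d - 1 ∣ q ^ n - 1) : d ∣ n := by
  rcases Nat.eq_zero_or_pos d with rfl | hd
  · simp only [pow_zero, Nat.sub_self, zero_dvd_iff] at h
    have h1 : 1 ≤ q ^ n := Nat.one_le_pow _ _ (by omega)
    have h2 : q ^ n = 1 := by omega
    have : n = 0 := by
      by_contra hn
      have : q ≤ q ^ n := Nat.le_self_pow hn q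
      omega
    simp [this]
  · set r := n % d with hr
    have hrd : r < d := Nat.mod_lt _ hd
    have h1 : 1 ≡ q ^ d [MOD q ^ d - 1] :=
      (Nat.modEq_iff_dvd' (Nat.one_le_pow _ _ (by omega))).mpr dvd_rfl
    have h2 : q ^ n ≡ q ^ r [MOD q ^ d - 1] := by
      conv_lhs => rw [← Nat.div_add_mod n d, pow_add, pow_mul, ← hr]
      calc (q ^ d) ^ (n / d) * q ^ r
          ≡ 1 ^ (n / d) * q ^ r [MOD q ^ d - 1] := Nat.ModEq.mul ((h1.symm).pow _) Nat.ModEq.rfl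
        _ = q ^ r := by ring
    have h3 : 1 ≡ q ^ n [MOD q ^ d - 1] :=
      (Nat.modEq_iff_dvd' (Nat.one_le_pow _ _ (by omega))).mpr h
    have h4 : q ^ d - 1 ∣ q ^ r - 1 :=
      (Nat.modEq_iff_dvd' (Nat.one_le_pow _ _ (by omega))).mp (h3.trans h2)
    have h5 : q ^ r - 1 < q ^ d - 1 := by
      have : q ^ r < q ^ d := Nat.pow_lt_pow_right (by omega) hrd
      have : 1 ≤ q ^ r := Nat.one_le_pow _ _ (by omega)
      omega
    have h6 : q ^ r - 1 = 0 := Nat.eq_zero_of_dvd_of_lt h4 h5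
    have h7 : q ^ r = 1 := by
      have : 1 ≤ q ^ r := Nat.one_le_pow _ _ (by omega)
      omega
    have h8 : r = 0 := by
      by_contra hrne
      have : q ≤ q ^ r := Nat.le_self_pow hrne q
      omega
    exact Nat.dvd_of_mod_eq_zero h8

lemma geom_le {q : ℕ} (hq : 2 ≤ q) (m : ℕ) : ∑ d ∈ Finset.range (m + 1), q ^ d ≤ 2 * q ^ m := by
  induction m with
  | zero => simp
  | succ m ih =>
    rw [Finset.sum_range_succ]
    have : 2 * q ^ m ≤ q * q ^ m := by
      apply Nat.mul_le_mul_right; omega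
    calc ∑ d ∈ Finset.range (m + 1), q ^ d + q ^ (m + 1)
        ≤ 2 * q ^ m + q ^ (m + 1) := by omega
      _ ≤ q * q ^ m + q ^ (m + 1) := by omega
      _ = 2 * q ^ (m + 1) := by ring

lemma finite_monicIrr (n : ℕ) :
    {P : Polynomial Fq | P.Monic ∧ Irreducible P ∧ P.natDegree = n}.Finite := by
  have h1 : Finite (Polynomial.degreeLT Fq (n + 1)) :=
    Finite.of_equiv _ (Polynomial.degreeLTEquiv Fq (n + 1)).toEquiv.symm
  have h2 : ((Polynomial.degreeLT Fq (n + 1) : Submodule Fq (Polynomial Fq)) :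
      Set (Polynomial Fq)).Finite := Set.finite_coe_iff.mp h1
  apply h2.subset
  rintro P ⟨hm, _, hd⟩
  simp only [SetLike.mem_coe, Polynomial.mem_degreeLT]
  rw [← Polynomial.natDegree_lt_iff_degree_lt hm.ne_zero]
  omega

/-- The finset of monic irreducible polynomials of degree `d`. -/
noncomputable def S (Fq : Type) [Field Fq] [Fintype Fq] (d : ℕ) : Finset (Polynomial Fq) :=
  (finite_monicIrr (Fq := Fq) d).toFinset

lemma mem_S {d : ℕ} {P : Polynomial Fq} :
    P ∈ S Fq d ↔ P.Monic ∧ Irreducible P ∧ P.natDegree = d := by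
  simp [S, Set.Finite.mem_toFinset]

lemma card_adjoinRoot {P : Polynomial Fq} (hm : P.Monic) (hi : Irreducible P)
    [Fact (Irreducible P)] [Fintype (AdjoinRoot P)] :
    Fintype.card (AdjoinRoot P) = Fintype.card Fq ^ P.natDegree := by
  rw [Module.card_fintype (AdjoinRoot.powerBasis hm.ne_zero).basis, Fintype.card_fin,
    AdjoinRoot.powerBasis_dim]

lemma lemmaA {n : ℕ} (hn : n ≠ 0) {P : Polynomial Fq} (hm : P.Monic) (hi : Irreducible P)
    (hdvd : P.natDegree ∣ n) :
    P ∣ (X : Polynomial Fq) ^ (Fintype.card Fq) ^ n - X := by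
  haveI : Fact (Irreducible P) := ⟨hi⟩
  haveI : Module.Finite Fq (AdjoinRoot P) := (AdjoinRoot.powerBasis hm.ne_zero).finite
  haveI : Finite (AdjoinRoot P) := Module.finite_of_finite Fq
  haveI : Fintype (AdjoinRoot P) := Fintype.ofFinite _
  set L := AdjoinRoot P
  set x := AdjoinRoot.root P
  obtain ⟨k, hk⟩ := hdvd
  have hcard : Fintype.card L = Fintype.card Fq ^ P.natDegree := card_adjoinRoot hm hi
  have hroot : x ^ (Fintype.card Fq) ^ n = x := by
    have h := FiniteField.pow_card_pow (K := L) k x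
    rwa [hcard, ← pow_mul, ← hk] at h
  have haev : Polynomial.aeval x ((X : Polynomial Fq) ^ (Fintype.card Fq) ^ n - X) = 0 := by
    rw [map_sub, map_pow, Polynomial.aeval_X, hroot, sub_self]
  have hmin : minpoly Fq x = P := by
    rw [AdjoinRoot.minpoly_root hm.ne_zero, hm.leadingCoeff, inv_one, map_one, mul_one]
  rw [← hmin]
  exact minpoly.dvd Fq x haev

lemma lemmaB {n : ℕ} (hn : n ≠ 0) {P : Polynomial Fq} (hm : P.Monic) (hi : Irreducible P)
    (hdvd : P ∣ (X : Polynomial Fq) ^ (Fintype.card Fq) ^ n - X) :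
    P.natDegree ∣ n := by
  haveI : Fact (Irreducible P) := ⟨hi⟩
  haveI : Module.Finite Fq (AdjoinRoot P) := (AdjoinRoot.powerBasis hm.ne_zero).finite
  haveI : Finite (AdjoinRoot P) := Module.finite_of_finite Fq
  haveI : Fintype (AdjoinRoot P) := Fintype.ofFinite _
  set q := Fintype.card Fq with hqdef
  set L := AdjoinRoot P
  set x := AdjoinRoot.root P
  have hcard : Fintype.card L = q ^ P.natDegree := card_adjoinRoot hm hi
  have hmin : minpoly Fq x = P := by
    rw [AdjoinRoot.minpoly_root hm.ne_zero, hm.leadingCoeff, inv_one, map_one, mul_one]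
  have hx : x ^ q ^ n = x := by
    obtain ⟨g, hg⟩ := hdvd
    have h0 : Polynomial.aeval x P = 0 := by
      have h00 := minpoly.aeval Fq x
      rwa [hmin] at h00
    have : Polynomial.aeval x ((X : Polynomial Fq) ^ q ^ n - X) = 0 := by
      rw [hg, map_mul, h0, zero_mul]
    rw [map_sub, map_pow, Polynomial.aeval_X, sub_eq_zero] at this
    exact this
  obtain ⟨p, hp⟩ := CharP.exists Fq
  haveI : CharP Fq p := hp
  haveI : CharP L p := charP_of_injective_algebraMap' Fq (A := L) p
  obtain ⟨m, hpp, hqm⟩ := FiniteField.card Fq p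
  haveI : Fact p.Prime := ⟨hpp⟩
  let φ : L →ₐ[Fq] L :=
    { toRingHom := iterateFrobenius L p ((m : ℕ) * n)
      commutes' := by
        intro a
        show iterateFrobenius L p ((m : ℕ) * n) (algebraMap Fq L a) = algebraMap Fq L a
        rw [iterateFrobenius_def, pow_mul, ← hqm, ← map_pow, FiniteField.pow_card_pow] }
  have hφq : ∀ y : L, φ y = y ^ q ^ n := by
    intro y
    show iterateFrobenius L p ((m : ℕ) * n) y = y ^ q ^ n
    rw [iterateFrobenius_def, pow_mul, ← hqm]
  have hφx : φ x = x := by rw [hφq, hx]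
  have hφ : φ = AlgHom.id Fq L := AdjoinRoot.algHom_ext (by rw [hφx]; rfl)
  have hall : ∀ y : L, y ^ q ^ n = y := by
    intro y
    have h1 : φ y = y := by rw [hφ]; rfl
    have h2 : φ y = y ^ q ^ n := hφq y
    rw [← h2, h1]
  have hu : ∀ u : Lˣ, u ^ (q ^ n - 1) = 1 := by
    intro u
    have hq1 : 1 ≤ q ^ n := Nat.one_le_pow _ _ Fintype.card_pos
    have h1 : (u : L) ^ (q ^ n - 1) * u = u := by
      rw [← pow_succ, Nat.sub_add_cancel hq1]
      exact hall u
    have h2 : (u : L) ^ (q ^ n - 1) = 1 := by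
      have := mul_right_cancel₀ (Units.ne_zero u) (h1.trans (one_mul (u : L)).symm)
      exact this
    ext
    rw [Units.val_pow_eq_pow_val, h2, Units.val_one]
  have hdvd2 : Fintype.card L - 1 ∣ q ^ n - 1 := by
    have h1 : Monoid.exponent Lˣ ∣ q ^ n - 1 := Monoid.exponent_dvd_of_forall_pow_eq_one hu
    rwa [IsCyclic.exponent_eq_card, Nat.card_eq_fintype_card, Fintype.card_units] at h1
  rw [hcard] at hdvd2
  exact dvd_of_pow_sub_one_dvd Fintype.one_lt_card hdvd2


lemma lemmaE1 {d : ℕ} (hd : d ≠ 0) :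
    d * (S Fq d).card ≤ Fintype.card Fq ^ d := by
  set q := Fintype.card Fq with hqdef
  have hq1 : 1 < q ^ d := Nat.one_lt_pow hd Fintype.one_lt_card
  have hdeg : ((X : Polynomial Fq) ^ q ^ d - X).natDegree = q ^ d :=
    FiniteField.X_pow_card_sub_X_natDegree_eq Fq hq1
  have hf0 : ((X : Polynomial Fq) ^ q ^ d - X) ≠ 0 :=
    FiniteField.X_pow_card_sub_X_ne_zero Fq hq1
  have hprod : (∏ P ∈ S Fq d, P) ∣ (X : Polynomial Fq) ^ q ^ d - X := by
    apply Finset.prod_dvd_of_coprime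
    · intro P hP Q hQ hne
      rw [Finset.mem_coe, mem_S] at hP hQ
      have hnd : ¬ P ∣ Q := by
        intro hdv
        exact hne (Polynomial.eq_of_monic_of_associated hP.1 hQ.1
          (hP.2.1.associated_of_dvd hQ.2.1 hdv))
      exact (hP.2.1.coprime_iff_not_dvd).mpr hnd
    · intro P hP
      rw [mem_S] at hP
      exact lemmaA hd hP.1 hP.2.1 (hP.2.2 ▸ dvd_refl d)
  have h1 := Polynomial.natDegree_le_of_dvd hprod hf0
  rw [hdeg, Polynomial.natDegree_prod _ _ (fun P hP => ((mem_S.mp hP).1).ne_zero)] at h1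
  calc d * (S Fq d).card = ∑ P ∈ S Fq d, P.natDegree := by
        rw [Finset.sum_congr rfl (fun P hP => (mem_S.mp hP).2.2), Finset.sum_const,
          smul_eq_mul, mul_comm]
    _ ≤ q ^ d := h1

lemma lemmaE2 {n : ℕ} (hn : n ≠ 0) :
    Fintype.card Fq ^ n ≤ ∑ d ∈ n.divisors, d * (S Fq d).card := by
  classical
  set q := Fintype.card Fq with hqdef
  have hq1 : 1 < q ^ n := Nat.one_lt_pow hn Fintype.one_lt_card
  set f : Polynomial Fq := (X : Polynomial Fq) ^ q ^ n - X with hfdef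
  have hdeg : f.natDegree = q ^ n := FiniteField.X_pow_card_sub_X_natDegree_eq Fq hq1
  have hf0 : f ≠ 0 := FiniteField.X_pow_card_sub_X_ne_zero Fq hq1
  have hfm : f.Monic := by
    apply Polynomial.monic_X_pow_sub
    rw [Polynomial.degree_X]
    exact_mod_cast hq1
  obtain ⟨p, hp⟩ := CharP.exists Fq
  haveI : CharP Fq p := hp
  obtain ⟨m, hpp, hqm⟩ := FiniteField.card Fq p
  have hsf : Squarefree f := by
    refine (galois_poly_separable p (q ^ n) ?_).squarefree
    rw [hqdef, hqm, ← pow_mul]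
    exact dvd_pow_self p (by positivity)
  have hnd := (UniqueFactorizationMonoid.squarefree_iff_nodup_normalizedFactors hf0).mp hsf
  let F : Finset (Polynomial Fq) := ⟨UniqueFactorizationMonoid.normalizedFactors f, hnd⟩
  have hmemF : ∀ {Q : Polynomial Fq},
      Q ∈ F ↔ Q ∈ UniqueFactorizationMonoid.normalizedFactors f := Iff.rfl
  have hQm : ∀ Q ∈ F, Q.Monic := by
    intro Q hQ
    rw [hmemF] at hQ
    have h1 := UniqueFactorizationMonoid.normalize_normalized_factor _ hQ
    have h2 : Q ≠ 0 := (UniqueFactorizationMonoid.irreducible_of_normalized_factor _ hQ).ne_zero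
    rw [← h1]
    exact Polynomial.monic_normalize h2
  have hfeq : f = ∏ Q ∈ F, Q := by
    have h1 : Associated (UniqueFactorizationMonoid.normalizedFactors f).prod f :=
      UniqueFactorizationMonoid.prod_normalizedFactors hf0
    have h2 : (∏ Q ∈ F, Q) = (UniqueFactorizationMonoid.normalizedFactors f).prod := by
      show (Multiset.map (fun Q => Q) F.val).prod = _
      rw [Multiset.map_id']
    have h3 : (∏ Q ∈ F, Q).Monic := Polynomial.monic_prod_of_monic _ _ hQm
    exact Polynomial.eq_of_monic_of_associated hfm h3 (by rw [h2]; exact h1.symm)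
  set T := n.divisors.biUnion (S Fq) with hTdef
  have hFT : F ⊆ T := by
    intro Q hQ
    rw [hmemF] at hQ
    have hQi := UniqueFactorizationMonoid.irreducible_of_normalized_factor _ hQ
    have hQmo := hQm Q (hmemF.mpr hQ)
    have hQdvd : Q ∣ f := UniqueFactorizationMonoid.dvd_of_mem_normalizedFactors hQ
    have hdd : Q.natDegree ∣ n := lemmaB hn hQmo hQi hQdvd
    exact Finset.mem_biUnion.mpr ⟨Q.natDegree, Nat.mem_divisors.mpr ⟨hdd, hn⟩,
      mem_S.mpr ⟨hQmo, hQi, rfl⟩⟩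
  have hdvdT : f ∣ ∏ P ∈ T, P := by
    rw [hfeq]
    exact Finset.prod_dvd_prod_of_subset F T _ hFT
  have hT0 : (∏ P ∈ T, P) ≠ 0 := by
    apply Finset.prod_ne_zero_iff.mpr
    intro P hP
    obtain ⟨d, _, hPS⟩ := Finset.mem_biUnion.mp hP
    exact (mem_S.mp hPS).1.ne_zero
  have h1 := Polynomial.natDegree_le_of_dvd hdvdT hT0
  rw [hdeg] at h1
  rw [Polynomial.natDegree_prod _ _ (fun P hP => by
    obtain ⟨d, _, hPS⟩ := Finset.mem_biUnion.mp hP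
    exact (mem_S.mp hPS).1.ne_zero)] at h1
  have h2 : ∑ P ∈ T, P.natDegree = ∑ d ∈ n.divisors, d * (S Fq d).card := by
    rw [hTdef, Finset.sum_biUnion ?_]
    · apply Finset.sum_congr rfl
      intro d _
      rw [Finset.sum_congr rfl (fun P hP => (mem_S.mp hP).2.2), Finset.sum_const,
        smul_eq_mul, mul_comm]
    · intro d _ e _ hde
      rw [Function.onFun, Finset.disjoint_left]
      intro P hPd hPe
      exact hde (((mem_S.mp hPd).2.2).symm.trans (mem_S.mp hPe).2.2)
  omega

lemma lemmaKey {n : ℕ} (hn : n ≠ 0) :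
    Fintype.card Fq ^ n ≤ n * (S Fq n).card + 2 * Fintype.card Fq ^ (n / 2) ∧
      n * (S Fq n).card ≤ Fintype.card Fq ^ n := by
  set q := Fintype.card Fq with hqdef
  refine ⟨?_, lemmaE1 hn⟩
  have h1 := lemmaE2 (Fq := Fq) hn
  rw [← Nat.insert_self_properDivisors hn, Finset.sum_insert (fun h =>
    absurd (Nat.mem_properDivisors.mp h).2 (lt_irrefl n))] at h1
  have h2 : ∑ d ∈ n.properDivisors, d * (S Fq d).card ≤ 2 * q ^ (n / 2) := by
    calc ∑ d ∈ n.properDivisors, d * (S Fq d).card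
        ≤ ∑ d ∈ n.properDivisors, q ^ d := by
          apply Finset.sum_le_sum
          intro d hd
          have hdvd := (Nat.mem_properDivisors.mp hd).1
          have hd0 : d ≠ 0 := by rintro rfl; exact hn (Nat.eq_zero_of_zero_dvd hdvd)
          exact lemmaE1 hd0
      _ ≤ ∑ d ∈ Finset.range (n / 2 + 1), q ^ d := by
          apply Finset.sum_le_sum_of_subset
          intro d hd
          rw [Finset.mem_range]
          obtain ⟨hdvd, hlt⟩ := Nat.mem_properDivisors.mp hd
          obtain ⟨k, hk⟩ := hdvd
          have hk2 : 2 ≤ k := by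
            rcases Nat.lt_or_ge k 2 with h | h
            · interval_cases k <;> omega
            · exact h
          have : d * 2 ≤ n := by nlinarith
          have : d ≤ n / 2 := Nat.le_div_iff_mul_le (by omega) |>.mpr this
          omega
      _ ≤ 2 * q ^ (n / 2) := geom_le Fintype.one_lt_card _
  rw [hqdef] at h2 ⊢
  omega

end PPT

/-- Prime polynomial theorem: `π_A(n) = q^n/n + O(q^{n/2}/n)` with an
absolute implied constant. -/
theorem prime_polynomial_theorem :
    ∃ C : ℝ, 0 < C ∧ ∀ (Fq : Type) [Field Fq] [Fintype Fq] (n : ℕ),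
      |(Set.ncard {P : Polynomial Fq | P.Monic ∧ Irreducible P ∧ P.natDegree = n} : ℝ)
          - (Fintype.card Fq : ℝ) ^ n / n|
        ≤ C * Real.sqrt ((Fintype.card Fq : ℝ) ^ n) / n := by
  refine ⟨2, by norm_num, ?_⟩
  intro Fq _ _ n
  rcases Nat.eq_zero_or_pos n with rfl | hn
  · have hempty : {P : Polynomial Fq | P.Monic ∧ Irreducible P ∧ P.natDegree = 0} = ∅ := by
      ext P
      simp only [Set.mem_setOf_eq, Set.mem_empty_iff_false, iff_false, not_and]
      intro hm hi
      intro hd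
      exact hi.not_isUnit (hm.natDegree_eq_zero.mp hd ▸ isUnit_one)
    rw [hempty]
    simp
  · have hn0 : n ≠ 0 := hn.ne'
    obtain ⟨hB, hA⟩ := PPT.lemmaKey (Fq := Fq) hn0
    have hncard : Set.ncard {P : Polynomial Fq | P.Monic ∧ Irreducible P ∧ P.natDegree = n}
        = (PPT.S Fq n).card := by
      rw [Set.ncard_eq_toFinset_card _ (PPT.finite_monicIrr n)]
      rfl
    rw [hncard]
    set q := Fintype.card Fq with hqdef
    set N := (PPT.S Fq n).card with hN
    have hq2 : (2:ℝ) ≤ (q:ℝ) := by exact_mod_cast Fintype.one_lt_card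
    have hnR : (0:ℝ) < (n:ℝ) := by exact_mod_cast hn
    have key1 : (n:ℝ) * (N:ℝ) ≤ (q:ℝ) ^ n := by exact_mod_cast hA
    have key2 : (q:ℝ) ^ n ≤ (n:ℝ) * (N:ℝ) + 2 * (q:ℝ) ^ (n / 2 : ℕ) := by exact_mod_cast hB
    have h1 : |(N:ℝ) - (q:ℝ) ^ n / n| = |(n:ℝ) * N - (q:ℝ) ^ n| / n := by
      have he : (N:ℝ) - (q:ℝ) ^ n / n = ((n:ℝ) * N - (q:ℝ) ^ n) / n := by
        field_simp
      rw [he, abs_div, abs_of_pos hnR]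
    have h2 : |(n:ℝ) * N - (q:ℝ) ^ n| ≤ 2 * (q:ℝ) ^ (n / 2 : ℕ) := by
      rw [abs_le]
      constructor <;> nlinarith [pow_nonneg (le_trans (by norm_num) hq2) (n / 2)]
    have h3 : (q:ℝ) ^ (n / 2 : ℕ) ≤ Real.sqrt ((q:ℝ) ^ n) := by
      rw [Real.le_sqrt (by positivity) (by positivity)]
      rw [← pow_mul]
      apply pow_le_pow_right₀ (by linarith)
      omega
    rw [h1]
    have : |(n:ℝ) * N - (q:ℝ) ^ n| ≤ 2 * Real.sqrt ((q:ℝ) ^ n) := by linarith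
    gcongr
end

section
/- Let r, h be monic polynomials in F_q[T] with r square-free, and let a_m = Π_{P | m} |P|/(|P|+1). Then as g → ∞ (with deg r ≤ (k-1)x bounded relative to g), Σ_{l monic, deg l ≤ (g - deg r)/2} a_{rhl}/|l| ∼ C(r,h) a_{rh} g for some positive constant C(r,h) bounded away from 0 uniformly. -/
open Polynomial Filter Asymptotics
open scoped Classical

variable {Fq : Type} [Field Fq] [Fintype Fq]

lemma finite_degLE (N : ℕ) : {p : Polynomial Fq | p.natDegree ≤ N}.Finite := by
  have : Set.InjOn (fun p : Polynomial Fq => fun i : Fin (N+1) => p.coeff i)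
      {p | p.natDegree ≤ N} := by
    intro p hp q hq hpq
    ext i
    by_cases hi : i ≤ N
    · exact congrFun hpq ⟨i, Nat.lt_succ_of_le hi⟩
    · rw [Polynomial.coeff_eq_zero_of_natDegree_lt (lt_of_le_of_lt hp (by omega)),
        Polynomial.coeff_eq_zero_of_natDegree_lt (lt_of_le_of_lt hq (by omega))]
  exact Set.Finite.of_finite_image (Set.toFinite _) this

/-- monic polynomials of natDegree exactly n, as a Finset -/
noncomputable def MD (Fq : Type) [Field Fq] [Fintype Fq] (n : ℕ) : Finset (Polynomial Fq) :=
  (finite_degLE n).toFinset.filter (fun p => p.Monic ∧ p.natDegree = n)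

lemma mem_MD {n : ℕ} {p : Polynomial Fq} : p ∈ MD Fq n ↔ p.Monic ∧ p.natDegree = n := by
  simp [MD, Set.Finite.mem_toFinset]
  intro h h'; omega

lemma coeff_modelPoly {n : ℕ} (c : Fin n → Fq) (k : ℕ) :
    (X ^ n + ∑ i : Fin n, C (c i) * X ^ (i : ℕ)).coeff k
      = (if k = n then 1 else 0) + (if h : k < n then c ⟨k, h⟩ else 0) := by
  have h2 : (∑ i : Fin n, C (c i) * X ^ (i : ℕ)).coeff k
      = (if h : k < n then c ⟨k, h⟩ else 0) := by
    rw [Polynomial.finset_sum_coeff]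
    simp_rw [Polynomial.coeff_C_mul, Polynomial.coeff_X_pow]
    by_cases h : k < n
    · rw [dif_pos h, Finset.sum_eq_single (⟨k, h⟩ : Fin n)]
      · simp
      · intro b _ hb
        have : k ≠ (b : ℕ) := fun hkb => hb (by simp [Fin.ext_iff, ← hkb])
        simp [this]
      · simp
    · rw [dif_neg h, Finset.sum_eq_zero]
      intro i _
      have : k ≠ (i : ℕ) := by omega
      simp [this]
  rw [Polynomial.coeff_add, Polynomial.coeff_X_pow, h2]

lemma card_MD (n : ℕ) : (MD Fq n).card = Fintype.card Fq ^ n := by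
  classical
  have hcard : (Finset.univ : Finset (Fin n → Fq)).card = Fintype.card Fq ^ n := by
    simp
  rw [← hcard]
  refine Finset.card_bij' (fun p _ => fun i : Fin n => p.coeff i)
    (fun c _ => X ^ n + ∑ i : Fin n, C (c i) * X ^ (i : ℕ)) ?_ ?_ ?_ ?_
  · intro p _; exact Finset.mem_univ _
  · intro c _
    rw [mem_MD]
    have hdeg : (∑ i : Fin n, C (c i) * X ^ (i : ℕ)).degree < (n : WithBot ℕ) :=
      degree_sum_fin_lt c
    have hm : (X ^ n + ∑ i : Fin n, C (c i) * X ^ (i : ℕ)).Monic := monic_X_pow_add hdeg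
    refine ⟨hm, ?_⟩
    have hd : (X ^ n + ∑ i : Fin n, C (c i) * X ^ (i : ℕ)).degree = (n : WithBot ℕ) := by
      rw [add_comm, Polynomial.degree_add_eq_right_of_degree_lt (by
        rwa [Polynomial.degree_X_pow])]
      exact Polynomial.degree_X_pow n
    exact Polynomial.natDegree_eq_of_degree_eq_some hd
  · intro p hp
    rw [mem_MD] at hp
    ext k
    rw [coeff_modelPoly]
    by_cases hk : k = n
    · have h1 : p.coeff k = 1 := by rw [hk, ← hp.2]; exact hp.1.coeff_natDegree
      have h3 : ¬ k < n := by omega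
      simp [hk, h3]
      rw [← hk, h1]
    · by_cases h2 : k < n
      · simp [hk, h2]
      · have : p.coeff k = 0 := Polynomial.coeff_eq_zero_of_natDegree_lt (by omega)
        simp [hk, h2, this]
  · intro c _
    funext i
    show (X ^ n + ∑ j : Fin n, C (c j) * X ^ (j : ℕ)).coeff ↑i = c i
    rw [coeff_modelPoly]
    have : ¬ ((i : ℕ) = n) := by omega
    simp [this, i.isLt]

lemma hq1 : 1 < Fintype.card Fq := Fintype.one_lt_card

lemma hqR : (2:ℝ) ≤ (Fintype.card Fq : ℝ) := by
  have := hq1 (Fq := Fq); exact_mod_cast this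

lemma pnorm_monic {p : Polynomial Fq} (hp : p.Monic) :
    pnorm p = (Fintype.card Fq : ℝ) ^ p.natDegree := if_neg hp.ne_zero

lemma pnorm_pos {p : Polynomial Fq} (hp : p.Monic) : 0 < pnorm p := by
  rw [pnorm_monic hp]
  positivity

/-- finset of monic irreducible divisors -/
noncomputable def Pset (m : Polynomial Fq) : Finset (Polynomial Fq) :=
  (finite_degLE m.natDegree).toFinset.filter
    (fun P => P.Monic ∧ Irreducible P ∧ P ∣ m)

lemma mem_Pset {m P : Polynomial Fq} (hm : m ≠ 0) :
    P ∈ Pset m ↔ P.Monic ∧ Irreducible P ∧ P ∣ m := by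
  simp only [Pset, Finset.mem_filter, Set.Finite.mem_toFinset, Set.mem_setOf_eq]
  refine ⟨fun h => h.2, fun h => ⟨Polynomial.natDegree_le_of_dvd h.2.2 hm, h⟩⟩

lemma am_eq_prod {m : Polynomial Fq} (hm : m ≠ 0) :
    am m = ∏ P ∈ Pset m, pnorm P / (pnorm P + 1) := by
  have h1 : am m = ∏ᶠ P ∈ {P : Polynomial Fq | P.Monic ∧ Irreducible P ∧ P ∣ m},
      pnorm P / (pnorm P + 1) := rfl
  rw [h1, show {P : Polynomial Fq | P.Monic ∧ Irreducible P ∧ P ∣ m} = ↑(Pset m) by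
    ext P; simp [mem_Pset hm], finprod_mem_coe_finset]

lemma card_dvd_MD {m : Polynomial Fq} (hm : m.Monic) {n : ℕ} (hd : m.natDegree ≤ n) :
    ((MD Fq n).filter (fun l => m ∣ l)).card = Fintype.card Fq ^ (n - m.natDegree) := by
  rw [← card_MD (Fq := Fq) (n - m.natDegree)]
  refine (Finset.card_bij (fun k _ => m * k) ?_ ?_ ?_).symm
  · intro k hk
    rw [mem_MD] at hk
    rw [Finset.mem_filter, mem_MD]
    refine ⟨⟨hm.mul hk.1, ?_⟩, Dvd.intro k rfl⟩
    rw [Polynomial.natDegree_mul hm.ne_zero hk.1.ne_zero, hk.2]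
    omega
  · intro k1 h1 k2 h2 he
    exact mul_left_cancel₀ hm.ne_zero he
  · intro l hl
    rw [Finset.mem_filter, mem_MD] at hl
    obtain ⟨k, hk⟩ := hl.2
    have hk0 : k ≠ 0 := by
      rintro rfl; rw [mul_zero] at hk; exact hl.1.1.ne_zero hk
    have hkm : k.Monic := by
      have := hl.1.1
      rw [hk] at this
      unfold Polynomial.Monic at this ⊢
      rwa [Polynomial.leadingCoeff_mul, hm.leadingCoeff, one_mul] at this
    refine ⟨k, ?_, hk.symm⟩
    rw [mem_MD]
    refine ⟨hkm, ?_⟩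
    have := hl.1.2
    rw [hk, Polynomial.natDegree_mul hm.ne_zero hk0] at this
    omega

lemma irr_prime {P : Polynomial Fq} (hP : Irreducible P) : Prime P :=
  irreducible_iff_prime.mp hP

lemma irr_natDegree_pos {P : Polynomial Fq} (hP : Irreducible P) : 0 < P.natDegree :=
  Polynomial.natDegree_pos_iff_degree_pos.mpr (Polynomial.degree_pos_of_irreducible hP)

lemma monic_irr_eq_of_dvd {P Q : Polynomial Fq} (hP : P.Monic) (hQ : Q.Monic)
    (hPi : Irreducible P) (hQi : Irreducible Q) (h : P ∣ Q) : P = Q := by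
  obtain ⟨c, hc⟩ := h
  rcases hQi.isUnit_or_isUnit hc with h1 | h2
  · exact absurd h1 hPi.not_isUnit
  · exact Polynomial.eq_of_monic_of_associated hP hQ ⟨h2.unit, by rw [hc]; simp⟩

/-- monic irreducible divisors of `l` not dividing `w` -/
noncomputable def Fl (w l : Polynomial Fq) : Finset (Polynomial Fq) :=
  (Pset l).filter (fun P => ¬ P ∣ w)

noncomputable def tl (w l : Polynomial Fq) : ℝ :=
  ∏ P ∈ Fl w l, pnorm P / (pnorm P + 1)

lemma mem_Fl {w l P : Polynomial Fq} (hl : l ≠ 0) :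
    P ∈ Fl w l ↔ P.Monic ∧ Irreducible P ∧ P ∣ l ∧ ¬ P ∣ w := by
  simp only [Fl, Finset.mem_filter, mem_Pset hl]
  tauto

lemma am_mul {w l : Polynomial Fq} (hw : w.Monic) (hl : l.Monic) :
    am (w * l) = am w * tl w l := by
  rw [am_eq_prod (mul_ne_zero hw.ne_zero hl.ne_zero), am_eq_prod hw.ne_zero, tl]
  have hdisj : Disjoint (Pset w) (Fl w l) := by
    rw [Finset.disjoint_right]
    intro P hPf hPw
    rw [mem_Fl hl.ne_zero] at hPf
    rw [mem_Pset hw.ne_zero] at hPw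
    exact hPf.2.2.2 hPw.2.2
  rw [show Pset (w * l) = Pset w ∪ Fl w l from ?_, Finset.prod_union hdisj]
  · ext P
    rw [mem_Pset (mul_ne_zero hw.ne_zero hl.ne_zero), Finset.mem_union,
      mem_Pset hw.ne_zero, mem_Fl hl.ne_zero]
    constructor
    · rintro ⟨h1, h2, h3⟩
      rcases (irr_prime h2).2.2 _ _ h3 with h | h
      · exact Or.inl ⟨h1, h2, h⟩
      · by_cases hd : P ∣ w
        · exact Or.inl ⟨h1, h2, hd⟩
        · exact Or.inr ⟨h1, h2, h, hd⟩
    · rintro (⟨h1, h2, h3⟩ | ⟨h1, h2, h3, _⟩)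
      · exact ⟨h1, h2, h3.mul_right l⟩
      · exact ⟨h1, h2, h3.mul_left w⟩

/-- all monic irreducibles of degree ≤ n not dividing w -/
noncomputable def Pfin (w : Polynomial Fq) (n : ℕ) : Finset (Polynomial Fq) :=
  (finite_degLE n).toFinset.filter (fun P => P.Monic ∧ Irreducible P ∧ ¬ P ∣ w)

lemma mem_Pfin {w P : Polynomial Fq} {n : ℕ} :
    P ∈ Pfin w n ↔ P.natDegree ≤ n ∧ P.Monic ∧ Irreducible P ∧ ¬ P ∣ w := by
  simp [Pfin, Set.Finite.mem_toFinset]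

def Dsum (u : Finset (Polynomial Fq)) : ℕ := ∑ P ∈ u, P.natDegree

noncomputable def piu (u : Finset (Polynomial Fq)) : ℝ := ∏ P ∈ u, (-(pnorm P + 1)⁻¹)

noncomputable def Un (w : Polynomial Fq) (n : ℕ) : Finset (Finset (Polynomial Fq)) :=
  (Pfin w n).powerset.filter (fun u => Dsum u ≤ n)

noncomputable def UD (w : Polynomial Fq) (d : ℕ) : Finset (Finset (Polynomial Fq)) :=
  (Pfin w d).powerset.filter (fun u => Dsum u = d)

noncomputable def Efun (w : Polynomial Fq) (d : ℕ) : ℝ := ∑ u ∈ UD w d, piu u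

lemma produ_monic {u : Finset (Polynomial Fq)} (hu : ∀ P ∈ u, P.Monic) :
    (∏ P ∈ u, P).Monic := Polynomial.monic_prod_of_monic u _ hu

lemma produ_natDegree {u : Finset (Polynomial Fq)} (hu : ∀ P ∈ u, P.Monic) :
    (∏ P ∈ u, P).natDegree = Dsum u := by
  rw [Polynomial.natDegree_prod]
  · rfl
  · exact fun P hP => (hu P hP).ne_zero

lemma pairwise_coprime {u : Finset (Polynomial Fq)}
    (hu : ∀ P ∈ u, P.Monic ∧ Irreducible P) :
    (↑u : Set (Polynomial Fq)).Pairwise (Function.onFun IsCoprime (id : Polynomial Fq → _)) := by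
  intro P hP Q hQ hne
  have hPm := hu P hP
  have hQm := hu Q hQ
  refine (Irreducible.coprime_iff_not_dvd hPm.2).mpr (fun hdvd => ?_)
  exact hne (monic_irr_eq_of_dvd hPm.1 hQm.1 hPm.2 hQm.2 hdvd)

lemma produ_dvd_iff {u : Finset (Polynomial Fq)} {l : Polynomial Fq}
    (hu : ∀ P ∈ u, P.Monic ∧ Irreducible P) :
    (∏ P ∈ u, P) ∣ l ↔ ∀ P ∈ u, P ∣ l := by
  constructor
  · intro hd P hP
    exact (Finset.dvd_prod_of_mem _ hP).trans hd
  · intro hall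
    exact Finset.prod_dvd_of_coprime (pairwise_coprime hu) hall

lemma tl_expand {w l : Polynomial Fq} (hl : l ≠ 0) :
    tl w l = ∑ u ∈ (Fl w l).powerset, piu u := by
  rw [tl]
  have : ∀ P ∈ Fl w l, pnorm P / (pnorm P + 1) = (-(pnorm P + 1)⁻¹) + 1 := by
    intro P hP
    have hPm : P.Monic := ((mem_Fl hl).mp hP).1
    have h0 : 0 < pnorm P := pnorm_pos hPm
    field_simp
    ring
  rw [Finset.prod_congr rfl this, Finset.prod_add]
  apply Finset.sum_congr rfl
  intro u _
  rw [Finset.prod_const_one, mul_one]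
  rfl

lemma core_identity (w : Polynomial Fq) (n : ℕ) :
    ∑ l ∈ MD Fq n, tl w l
      = ∑ d ∈ Finset.range (n + 1), Efun w d * (Fintype.card Fq : ℝ) ^ (n - d) := by
  classical
  have step1 : ∀ l ∈ MD Fq n, tl w l = ∑ u ∈ (Un w n).filter (· ⊆ Fl w l), piu u := by
    intro l hl
    rw [mem_MD] at hl
    rw [tl_expand hl.1.ne_zero]
    congr 1
    ext u
    simp only [Finset.mem_powerset, Finset.mem_filter, Un, Finset.mem_powerset]
    constructor
    · intro hsub
      have hmem : ∀ P ∈ u, P.Monic ∧ Irreducible P ∧ P ∣ l ∧ ¬ P ∣ w := by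
        intro P hP
        exact (mem_Fl hl.1.ne_zero).mp (hsub hP)
      have hdvd : (∏ P ∈ u, P) ∣ l :=
        (produ_dvd_iff (fun P hP => ⟨(hmem P hP).1, (hmem P hP).2.1⟩)).mpr
          (fun P hP => (hmem P hP).2.2.1)
      have hD : Dsum u ≤ n := by
        rw [← produ_natDegree (fun P hP => (hmem P hP).1), ← hl.2]
        exact Polynomial.natDegree_le_of_dvd hdvd hl.1.ne_zero
      refine ⟨⟨?_, hD⟩, hsub⟩
      intro P hP
      rw [mem_Pfin]
      exact ⟨le_trans (Polynomial.natDegree_le_of_dvd (hmem P hP).2.2.1 hl.1.ne_zero)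
          hl.2.le, (hmem P hP).1, (hmem P hP).2.1, (hmem P hP).2.2.2⟩
    · exact fun h => h.2
  rw [Finset.sum_congr rfl step1]
  rw [Finset.sum_comm' (t' := Un w n) (s' := fun u => (MD Fq n).filter (fun l => u ⊆ Fl w l))]
  · have step2 : ∀ u ∈ Un w n,
        (∑ _l ∈ (MD Fq n).filter (fun l => u ⊆ Fl w l), piu u)
          = piu u * ((Fintype.card Fq : ℝ) ^ (n - Dsum u)) := by
      intro u hu
      simp only [Un, Finset.mem_filter, Finset.mem_powerset] at hu
      have hprops : ∀ P ∈ u, P.Monic ∧ Irreducible P ∧ ¬ P ∣ w := by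
        intro P hP
        have := hu.1 hP
        rw [mem_Pfin] at this
        exact this.2
      rw [Finset.sum_const, nsmul_eq_mul, mul_comm]
      congr 1
      have hfe : (MD Fq n).filter (fun l => u ⊆ Fl w l)
          = (MD Fq n).filter (fun l => (∏ P ∈ u, P) ∣ l) := by
        ext l
        simp only [Finset.mem_filter, mem_MD]
        constructor
        · rintro ⟨hl, hsub⟩
          refine ⟨hl, (produ_dvd_iff (fun P hP => ⟨(hprops P hP).1,
            (hprops P hP).2.1⟩)).mpr (fun P hP => ?_)⟩
          exact ((mem_Fl hl.1.ne_zero).mp (hsub hP)).2.2.1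
        · rintro ⟨hl, hdvd⟩
          refine ⟨hl, fun P hP => ?_⟩
          rw [mem_Fl hl.1.ne_zero]
          exact ⟨(hprops P hP).1, (hprops P hP).2.1,
            (Finset.dvd_prod_of_mem _ hP).trans hdvd, (hprops P hP).2.2⟩
      have hmon : (∏ P ∈ u, P).Monic := produ_monic (fun P hP => (hprops P hP).1)
      have hdeg : (∏ P ∈ u, P).natDegree = Dsum u :=
        produ_natDegree (fun P hP => (hprops P hP).1)
      rw [hfe, card_dvd_MD hmon (by omega : (∏ P ∈ u, P).natDegree ≤ n), hdeg]
      push_cast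
      rfl
    rw [Finset.sum_congr rfl step2]
    have hmaps : ∀ u ∈ Un w n, Dsum u ∈ Finset.range (n + 1) := by
      intro u hu
      simp only [Un, Finset.mem_filter] at hu
      exact Finset.mem_range.mpr (by omega)
    rw [← Finset.sum_fiberwise_of_maps_to hmaps]
    apply Finset.sum_congr rfl
    intro d hd
    rw [Finset.mem_range] at hd
    have hUD : (Un w n).filter (fun u => Dsum u = d) = UD w d := by
      ext u
      simp only [Un, UD, Finset.mem_filter, Finset.mem_powerset]
      constructor
      · rintro ⟨⟨hsub, _⟩, hDd⟩
        refine ⟨fun P hP => ?_, hDd⟩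
        have h1 := hsub hP
        rw [mem_Pfin] at h1 ⊢
        have h2 : P.natDegree ≤ Dsum u :=
          Finset.single_le_sum (fun Q _ => Nat.zero_le _) hP
        exact ⟨by omega, h1.2⟩
      · rintro ⟨hsub, hDd⟩
        refine ⟨⟨fun P hP => ?_, by omega⟩, hDd⟩
        have h1 := hsub hP
        rw [mem_Pfin] at h1 ⊢
        exact ⟨by omega, h1.2⟩
    rw [hUD, Efun, Finset.sum_mul]
    apply Finset.sum_congr rfl
    intro u hu
    simp only [UD, Finset.mem_filter] at hu
    rw [hu.2]
  · intro l u
    simp only [Finset.mem_filter]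
    tauto

lemma mem_UD_props {w : Polynomial Fq} {d : ℕ} {u : Finset (Polynomial Fq)}
    (hu : u ∈ UD w d) :
    (∀ P ∈ u, P.Monic ∧ Irreducible P ∧ ¬ P ∣ w) ∧ Dsum u = d := by
  simp only [UD, Finset.mem_filter, Finset.mem_powerset] at hu
  exact ⟨fun P hP => ((mem_Pfin).mp (hu.1 hP)).2, hu.2⟩

lemma UD_zero (w : Polynomial Fq) : UD w 0 = {∅} := by
  ext u
  simp only [UD, Finset.mem_filter, Finset.mem_powerset, Finset.mem_singleton]
  constructor
  · rintro ⟨hsub, hD⟩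
    rw [Finset.eq_empty_iff_forall_notMem]
    intro P hP
    have h1 := (mem_Pfin.mp (hsub hP)).2.2.1
    have h2 : P.natDegree ≤ Dsum u := Finset.single_le_sum (fun Q _ => Nat.zero_le _) hP
    have := irr_natDegree_pos h1
    omega
  · rintro rfl
    exact ⟨Finset.empty_subset _, rfl⟩

lemma Efun_zero (w : Polynomial Fq) : Efun w 0 = 1 := by
  rw [Efun, UD_zero, Finset.sum_singleton, piu, Finset.prod_empty]

lemma prod_add_one_ge {u : Finset (Polynomial Fq)} (hne : u.Nonempty) {a : Polynomial Fq → ℝ}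
    (ha : ∀ P ∈ u, 1 ≤ a P) :
    (∏ P ∈ u, a P) + 1 ≤ ∏ P ∈ u, (a P + 1) := by
  induction hne using Finset.Nonempty.cons_induction with
  | singleton P => simp
  | cons P u hPu hne ih =>
    rw [Finset.prod_cons, Finset.prod_cons]
    have haP : 1 ≤ a P := ha P (Finset.mem_cons_self P u)
    have ha' : ∀ Q ∈ u, 1 ≤ a Q := fun Q hQ => ha Q (Finset.mem_cons.mpr (Or.inr hQ))
    have ihu := ih ha'
    have hprodpos : (1:ℝ) ≤ ∏ Q ∈ u, a Q := by
      have := Finset.prod_le_prod (f := fun _ : Polynomial Fq => (1:ℝ)) (g := a)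
        (fun Q _ => zero_le_one) (fun Q hQ => ha' Q hQ)
      rwa [Finset.prod_const_one] at this
    nlinarith

lemma prod_pnorm {u : Finset (Polynomial Fq)} (hu : ∀ P ∈ u, P.Monic) :
    ∏ P ∈ u, pnorm P = (Fintype.card Fq : ℝ) ^ Dsum u := by
  rw [show ∏ P ∈ u, pnorm P = ∏ P ∈ u, (Fintype.card Fq : ℝ) ^ P.natDegree from
    Finset.prod_congr rfl (fun P hP => pnorm_monic (hu P hP))]
  exact Finset.prod_pow_eq_pow_sum u _ _

lemma abs_piu_le {w : Polynomial Fq} {d : ℕ} (hd : 1 ≤ d) {u : Finset (Polynomial Fq)}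
    (hu : u ∈ UD w d) : |piu u| ≤ ((Fintype.card Fq : ℝ) ^ d + 1)⁻¹ := by
  obtain ⟨hprops, hD⟩ := mem_UD_props hu
  have hne : u.Nonempty := by
    rw [Finset.nonempty_iff_ne_empty]
    rintro rfl
    rw [Dsum, Finset.sum_empty] at hD
    omega
  have habs : |piu u| = (∏ P ∈ u, (pnorm P + 1))⁻¹ := by
    rw [piu, Finset.abs_prod, ← Finset.prod_inv_distrib]
    apply Finset.prod_congr rfl
    intro P hP
    have := pnorm_pos (hprops P hP).1
    rw [abs_neg, abs_inv, abs_of_pos (by linarith)]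
  rw [habs]
  have h1 : (Fintype.card Fq : ℝ) ^ d + 1 ≤ ∏ P ∈ u, (pnorm P + 1) := by
    have := prod_add_one_ge hne (a := pnorm) (fun P hP => ?_)
    · rw [prod_pnorm (fun P hP => (hprops P hP).1), hD] at this
      exact this
    · rw [pnorm_monic (hprops P hP).1]
      exact one_le_pow₀ (by linarith [hqR (Fq := Fq)])
  have h2 : (0:ℝ) < (Fintype.card Fq : ℝ) ^ d + 1 := by positivity
  exact inv_anti₀ h2 h1

lemma card_UD_le (w : Polynomial Fq) (d : ℕ) :
    ((UD w d).card : ℝ) ≤ (Fintype.card Fq : ℝ) ^ d := by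
  have hinj : Set.InjOn (fun u : Finset (Polynomial Fq) => ∏ P ∈ u, P) ↑(UD w d) := by
    intro u hu v hv he
    simp only [Finset.coe_sort_coe, Finset.mem_coe] at hu hv
    have hup := (mem_UD_props hu).1
    have hvp := (mem_UD_props hv).1
    have key : ∀ (u' v' : Finset (Polynomial Fq)),
        (∀ P ∈ u', P.Monic ∧ Irreducible P ∧ ¬ P ∣ w) →
        (∀ P ∈ v', P.Monic ∧ Irreducible P ∧ ¬ P ∣ w) →
        (∏ P ∈ u', P) = (∏ P ∈ v', P) → u' ⊆ v' := by
      intro u' v' hu' hv' he' P hP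
      have hPp := hu' P hP
      have hdvd : P ∣ ∏ Q ∈ v', Q := by
        rw [← he']
        exact Finset.dvd_prod_of_mem _ hP
      obtain ⟨Q, hQ, hPQ⟩ :=
        (Prime.dvd_finset_prod_iff (irr_prime hPp.2.1) _).mp hdvd
      have hQp := hv' Q hQ
      rwa [monic_irr_eq_of_dvd hPp.1 hQp.1 hPp.2.1 hQp.2.1 hPQ]
    exact Finset.Subset.antisymm (key u v hup hvp he) (key v u hvp hup he.symm)
  have hmaps : ∀ u ∈ UD w d, (∏ P ∈ u, P) ∈ MD Fq d := by
    intro u hu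
    obtain ⟨hprops, hD⟩ := mem_UD_props hu
    rw [mem_MD]
    exact ⟨produ_monic (fun P hP => (hprops P hP).1),
      by rw [produ_natDegree (fun P hP => (hprops P hP).1), hD]⟩
  have := Finset.card_le_card_of_injOn _ hmaps hinj
  rw [card_MD] at this
  exact_mod_cast this

lemma abs_Efun_le {w : Polynomial Fq} {d : ℕ} (hd : 1 ≤ d) :
    |Efun w d| ≤ (Fintype.card Fq : ℝ) ^ d * ((Fintype.card Fq : ℝ) ^ d + 1)⁻¹ := by
  calc |Efun w d| ≤ ∑ u ∈ UD w d, |piu u| := Finset.abs_sum_le_sum_abs _ _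
    _ ≤ ∑ _u ∈ UD w d, ((Fintype.card Fq : ℝ) ^ d + 1)⁻¹ :=
        Finset.sum_le_sum (fun u hu => abs_piu_le hd hu)
    _ = ((UD w d).card : ℝ) * ((Fintype.card Fq : ℝ) ^ d + 1)⁻¹ := by
        rw [Finset.sum_const, nsmul_eq_mul]
    _ ≤ (Fintype.card Fq : ℝ) ^ d * ((Fintype.card Fq : ℝ) ^ d + 1)⁻¹ := by
        apply mul_le_mul_of_nonneg_right (card_UD_le w d)
        positivity

noncomputable def sseq (w : Polynomial Fq) (n : ℕ) : ℝ :=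
  ∑ d ∈ Finset.range (n + 1), Efun w d * ((Fintype.card Fq : ℝ) ^ d)⁻¹

lemma abs_eps_le {w : Polynomial Fq} {d : ℕ} (hd : 1 ≤ d) :
    |Efun w d * ((Fintype.card Fq : ℝ) ^ d)⁻¹| ≤ ((Fintype.card Fq : ℝ) ^ d + 1)⁻¹ := by
  have hq : (2:ℝ) ≤ (Fintype.card Fq : ℝ) := hqR
  have hqd : (0:ℝ) < (Fintype.card Fq : ℝ) ^ d := by positivity
  rw [abs_mul, abs_inv, abs_of_pos hqd]
  calc |Efun w d| * ((Fintype.card Fq : ℝ) ^ d)⁻¹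
      ≤ ((Fintype.card Fq : ℝ) ^ d * ((Fintype.card Fq : ℝ) ^ d + 1)⁻¹)
          * ((Fintype.card Fq : ℝ) ^ d)⁻¹ := by
        apply mul_le_mul_of_nonneg_right (abs_Efun_le hd)
        positivity
    _ = ((Fintype.card Fq : ℝ) ^ d + 1)⁻¹ := by
        field_simp
  
lemma eps_le_half_pow {w : Polynomial Fq} {d : ℕ} (hd : 1 ≤ d) :
    |Efun w d * ((Fintype.card Fq : ℝ) ^ d)⁻¹| ≤ (1/2:ℝ) ^ d := by
  refine (abs_eps_le hd).trans ?_
  have hq : (2:ℝ) ≤ (Fintype.card Fq : ℝ) := hqR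
  have h1 : (2:ℝ) ^ d ≤ (Fintype.card Fq : ℝ) ^ d + 1 := by
    have := pow_le_pow_left₀ (by norm_num : (0:ℝ) ≤ 2) hq d
    linarith
  rw [div_pow, one_pow, one_div]
  exact inv_anti₀ (by positivity) h1

lemma tail_geo (a b : ℕ) : ∑ d ∈ Finset.Ico a b, (1/2:ℝ) ^ d ≤ (1/2:ℝ) ^ a * 2 := by
  have := geom_sum_Ico_le_of_lt_one (by norm_num : (0:ℝ) ≤ 1/2) (by norm_num : (1/2:ℝ) < 1)
    (m := a) (n := b)
  calc ∑ d ∈ Finset.Ico a b, (1/2:ℝ) ^ d ≤ (1/2:ℝ)^a / (1 - 1/2) := this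
    _ = (1/2:ℝ)^a * 2 := by ring

lemma sseq_diff {w : Polynomial Fq} {n m : ℕ} (hnm : n ≤ m) :
    |sseq w m - sseq w n| ≤ (1/2:ℝ) ^ n := by
  rw [sseq, sseq, ← Finset.sum_Ico_eq_sub _ (by omega : n + 1 ≤ m + 1)]
  calc |∑ d ∈ Finset.Ico (n+1) (m+1), Efun w d * ((Fintype.card Fq : ℝ) ^ d)⁻¹|
      ≤ ∑ d ∈ Finset.Ico (n+1) (m+1), |Efun w d * ((Fintype.card Fq : ℝ) ^ d)⁻¹| :=
        Finset.abs_sum_le_sum_abs _ _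
    _ ≤ ∑ d ∈ Finset.Ico (n+1) (m+1), (1/2:ℝ) ^ d := by
        apply Finset.sum_le_sum
        intro d hd
        rw [Finset.mem_Ico] at hd
        exact eps_le_half_pow (by omega)
    _ ≤ (1/2:ℝ)^(n+1) * 2 := tail_geo _ _
    _ = (1/2:ℝ)^n := by ring

lemma range_split (n : ℕ) (f : ℕ → ℝ) :
    ∑ d ∈ Finset.range (n+1), f d = f 0 + ∑ d ∈ Finset.Icc 1 n, f d := by
  rw [show Finset.range (n+1) = insert 0 (Finset.Icc 1 n) by
    ext x; simp only [Finset.mem_range, Finset.mem_insert, Finset.mem_Icc]; omega,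
    Finset.sum_insert (by simp)]

lemma tail_sum_le (n : ℕ) :
    ∑ d ∈ Finset.Icc 1 n, ((Fintype.card Fq : ℝ) ^ d + 1)⁻¹ ≤ 5/6 := by
  have hq : (2:ℝ) ≤ (Fintype.card Fq : ℝ) := hqR
  rcases Nat.eq_zero_or_pos n with rfl | hn
  · norm_num
  have key : ∀ m, 1 ≤ m → ∑ d ∈ Finset.Icc 1 m, ((Fintype.card Fq : ℝ) ^ d + 1)⁻¹
      ≤ 5/6 - (1/2:ℝ)^m := by
    intro m hm
    induction m with
    | zero => omega
    | succ k ih =>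
      rcases Nat.eq_zero_or_pos k with rfl | hk
      · simp only [Finset.Icc_self, Finset.sum_singleton, pow_one]
        have h2 : (3:ℝ) ≤ (Fintype.card Fq : ℝ) + 1 := by linarith
        have h3 : ((Fintype.card Fq : ℝ) + 1)⁻¹ ≤ 1/3 := by
          rw [show (1/3 : ℝ) = ((3:ℝ))⁻¹ by norm_num]
          exact inv_anti₀ (by norm_num) h2
        norm_num
        linarith
      · rw [Finset.sum_Icc_succ_top (by omega : 1 ≤ k + 1)]
        have hstep : ((Fintype.card Fq:ℝ) ^ (k + 1) + 1)⁻¹ ≤ (1/2:ℝ) ^ (k + 1) := by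
          have h1 : (2:ℝ) ^ (k+1) ≤ (Fintype.card Fq : ℝ) ^ (k+1) + 1 := by
            have := pow_le_pow_left₀ (by norm_num : (0:ℝ) ≤ 2) hq (k+1)
            linarith
          rw [div_pow, one_pow, one_div]
          exact inv_anti₀ (by positivity) h1
        have ihh := ih hk
        have hhalf : (1/2:ℝ)^(k+1) = (1/2:ℝ)^k * (1/2) := by ring
        linarith
  exact (key n hn).trans (sub_le_self _ (by positivity))

lemma sseq_bounds (w : Polynomial Fq) (n : ℕ) : 1/6 ≤ sseq w n ∧ sseq w n ≤ 2 := by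
  have h0 : Efun w 0 * ((Fintype.card Fq : ℝ) ^ 0)⁻¹ = 1 := by
    rw [Efun_zero]; norm_num
  have htail : |∑ d ∈ Finset.Icc 1 n, Efun w d * ((Fintype.card Fq : ℝ) ^ d)⁻¹| ≤ 5/6 := by
    calc |∑ d ∈ Finset.Icc 1 n, Efun w d * ((Fintype.card Fq : ℝ) ^ d)⁻¹|
        ≤ ∑ d ∈ Finset.Icc 1 n, |Efun w d * ((Fintype.card Fq : ℝ) ^ d)⁻¹| :=
          Finset.abs_sum_le_sum_abs _ _
      _ ≤ ∑ d ∈ Finset.Icc 1 n, ((Fintype.card Fq : ℝ) ^ d + 1)⁻¹ :=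
          Finset.sum_le_sum (fun d hd => abs_eps_le (by
            rw [Finset.mem_Icc] at hd; omega))
      _ ≤ 5/6 := tail_sum_le n
  rw [sseq, range_split, h0]
  rw [abs_le] at htail
  constructor <;> linarith

lemma sseq_tendsto (w : Polynomial Fq) :
    ∃ c : ℝ, Tendsto (sseq w) atTop (nhds c) ∧ 1/6 ≤ c ∧ c ≤ 2 ∧
      ∀ n, |sseq w n - c| ≤ (1/2:ℝ)^n := by
  have hcauchy : CauchySeq (sseq w) := by
    apply cauchySeq_of_le_geometric (1/2 : ℝ) 1 (by norm_num)
    intro n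
    rw [Real.dist_eq, abs_sub_comm, one_mul]
    exact sseq_diff (Nat.le_succ n)
  obtain ⟨c, hc⟩ := cauchySeq_tendsto_of_complete hcauchy
  refine ⟨c, hc, ?_, ?_, ?_⟩
  · exact le_of_tendsto_of_tendsto tendsto_const_nhds hc
      (Filter.Eventually.of_forall (fun n => (sseq_bounds w n).1))
  · exact le_of_tendsto_of_tendsto hc tendsto_const_nhds
      (Filter.Eventually.of_forall (fun n => (sseq_bounds w n).2))
  · intro n
    have h1 : Tendsto (fun m => |sseq w n - sseq w m|) atTop (nhds |sseq w n - c|) :=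
      ((tendsto_const_nhds.sub hc).abs)
    apply le_of_tendsto h1
    filter_upwards [eventually_ge_atTop n] with m hm
    rw [abs_sub_comm]
    exact sseq_diff hm

noncomputable def MLE (Fq : Type) [Field Fq] [Fintype Fq] (N : ℕ) : Finset (Polynomial Fq) :=
  (finite_degLE N).toFinset.filter (fun p => p.Monic)

lemma mem_MLE {N : ℕ} {p : Polynomial Fq} :
    p ∈ MLE Fq N ↔ p.Monic ∧ p.natDegree ≤ N := by
  simp [MLE, Set.Finite.mem_toFinset]
  tauto

lemma MD_tl_sum (w : Polynomial Fq) (n : ℕ) :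
    (∑ l ∈ MD Fq n, tl w l) * ((Fintype.card Fq : ℝ) ^ n)⁻¹ = sseq w n := by
  rw [core_identity, sseq, Finset.sum_mul]
  apply Finset.sum_congr rfl
  intro d hd
  rw [Finset.mem_range] at hd
  have hqpos : (0:ℝ) < (Fintype.card Fq : ℝ) := lt_of_lt_of_le two_pos hqR
  have hpow : (Fintype.card Fq:ℝ)^(n-d) * (Fintype.card Fq:ℝ)^d = (Fintype.card Fq:ℝ)^n := by
    rw [← pow_add]
    congr 1
    omega
  rw [mul_assoc]
  congr 1
  have h1 : ((Fintype.card Fq:ℝ)^n) ≠ 0 := by positivity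
  have h2 : ((Fintype.card Fq:ℝ)^d) ≠ 0 := by positivity
  field_simp
  linarith [hpow]

lemma Fsum_eq {w : Polynomial Fq} (hw : w.Monic) (N : ℕ) :
    (∑ᶠ l ∈ {l : Polynomial Fq | l.Monic ∧ l.natDegree ≤ N}, am (w * l) / pnorm l)
      = am w * ∑ n ∈ Finset.range (N + 1), sseq w n := by
  have hset : {l : Polynomial Fq | l.Monic ∧ l.natDegree ≤ N} = ↑(MLE Fq N) := by
    ext l; simp [mem_MLE]
  rw [hset, finsum_mem_coe_finset]
  have hmaps : ∀ l ∈ MLE Fq N, l.natDegree ∈ Finset.range (N + 1) := by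
    intro l hl
    rw [mem_MLE] at hl
    exact Finset.mem_range.mpr (by omega)
  rw [← Finset.sum_fiberwise_of_maps_to hmaps, Finset.mul_sum]
  apply Finset.sum_congr rfl
  intro n hn
  rw [Finset.mem_range] at hn
  have hfib : (MLE Fq N).filter (fun l => l.natDegree = n) = MD Fq n := by
    ext l
    simp only [Finset.mem_filter, mem_MLE, mem_MD]
    constructor
    · rintro ⟨⟨h1, _⟩, h3⟩; exact ⟨h1, h3⟩
    · rintro ⟨h1, h2⟩; exact ⟨⟨h1, by omega⟩, h2⟩
  rw [hfib]
  have hterm : ∀ l ∈ MD Fq n, am (w * l) / pnorm l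
      = am w * tl w l * ((Fintype.card Fq : ℝ) ^ n)⁻¹ := by
    intro l hl
    rw [mem_MD] at hl
    rw [am_mul hw hl.1, pnorm_monic hl.1, hl.2, div_eq_mul_inv]
  rw [Finset.sum_congr rfl hterm]
  rw [← Finset.sum_mul, ← Finset.mul_sum, mul_assoc, MD_tl_sum]

lemma am_pos {w : Polynomial Fq} (hw : w.Monic) : 0 < am w := by
  rw [am_eq_prod hw.ne_zero]
  apply Finset.prod_pos
  intro P hP
  have hPm : P.Monic := ((mem_Pset hw.ne_zero).mp hP).1
  have := pnorm_pos hPm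
  positivity

lemma sigma_bound {w : Polynomial Fq} {c : ℝ} (hc : ∀ n, |sseq w n - c| ≤ (1/2:ℝ)^n)
    (N : ℕ) : |(∑ n ∈ Finset.range (N+1), sseq w n) - c * (N+1)| ≤ 2 := by
  have : (∑ n ∈ Finset.range (N+1), sseq w n) - c * (N+1)
      = ∑ n ∈ Finset.range (N+1), (sseq w n - c) := by
    rw [Finset.sum_sub_distrib, Finset.sum_const, Finset.card_range, nsmul_eq_mul]
    push_cast
    ring
  rw [this]
  calc |∑ n ∈ Finset.range (N+1), (sseq w n - c)|
      ≤ ∑ n ∈ Finset.range (N+1), |sseq w n - c| := Finset.abs_sum_le_sum_abs _ _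
    _ ≤ ∑ n ∈ Finset.range (N+1), (1/2:ℝ)^n := Finset.sum_le_sum (fun n _ => hc n)
    _ ≤ 2 := sum_geometric_two_le _


/-- `Σ_{l monic, deg l ≤ (g - deg r)/2} a_{rhl}/|l| ∼ C(r,h) a_{rh} g`
with `C(r,h)` uniformly bounded away from `0`. -/
theorem l_sum_asymptotic :
    ∃ c₀ : ℝ, 0 < c₀ ∧
      ∀ r h : Polynomial Fq, r.Monic → h.Monic → Squarefree r →
        ∃ C : ℝ, c₀ ≤ C ∧
          (fun g : ℕ => ∑ᶠ l ∈ {l : Polynomial Fq | l.Monic ∧ l.natDegree ≤ (g - r.natDegree) / 2},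
              am (r * h * l) / pnorm l)
            ~[atTop]
          (fun g : ℕ => C * am (r * h) * (g : ℝ)) := by
  refine ⟨1/12, by norm_num, ?_⟩
  intro r h hr hh _hsq
  have hw : (r * h).Monic := hr.mul hh
  obtain ⟨c, _hct, hclo, hchi, hcclose⟩ := sseq_tendsto (r * h)
  refine ⟨c/2, by linarith, ?_⟩
  have hampos : 0 < am (r * h) := am_pos hw
  set dr := r.natDegree with hdr
  set K := c/2 * am (r * h) with hK
  have hKpos : 0 < K := by
    rw [hK]; positivity
  have hFeq : ∀ g : ℕ,
      (∑ᶠ l ∈ {l : Polynomial Fq | l.Monic ∧ l.natDegree ≤ (g - dr) / 2},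
        am (r * h * l) / pnorm l)
      = am (r * h) * ∑ n ∈ Finset.range ((g - dr) / 2 + 1), sseq (r * h) n :=
    fun g => Fsum_eq hw ((g - dr) / 2)
  set B := am (r * h) * (2 + (dr + 2)) with hB
  have hbound : ∀ g : ℕ,
      |(∑ᶠ l ∈ {l : Polynomial Fq | l.Monic ∧ l.natDegree ≤ (g - dr) / 2},
        am (r * h * l) / pnorm l) - c/2 * am (r * h) * g| ≤ B := by
    intro g
    rw [hFeq g]
    set L := (g - dr) / 2 with hL
    have hnat1 : 2 * L + 2 ≤ g + dr + 2 := by omega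
    have hnat2 : g ≤ 2 * L + 2 + dr := by omega
    have habs2 : |2 * (L:ℝ) + 2 - (g:ℝ)| ≤ (dr:ℝ) + 2 := by
      rw [abs_le]
      constructor
      · have := hnat2
        push_cast
        have : (g:ℝ) ≤ 2 * L + 2 + dr := by exact_mod_cast hnat2
        linarith
      · have : 2 * (L:ℝ) + 2 ≤ (g:ℝ) + dr + 2 := by exact_mod_cast hnat1
        linarith
    have hsig := sigma_bound hcclose L
    have key : am (r * h) * ∑ n ∈ Finset.range (L + 1), sseq (r * h) n
        - c/2 * am (r * h) * g
        = am (r * h) * (((∑ n ∈ Finset.range (L + 1), sseq (r * h) n) - c * (L+1))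
            + c/2 * (2 * (L:ℝ) + 2 - g)) := by
      ring
    rw [key, abs_mul, abs_of_pos hampos, hB]
    apply mul_le_mul_of_nonneg_left _ hampos.le
    calc |(∑ n ∈ Finset.range (L + 1), sseq (r * h) n) - c * (L+1)
            + c/2 * (2 * (L:ℝ) + 2 - g)|
        ≤ |(∑ n ∈ Finset.range (L + 1), sseq (r * h) n) - c * (L+1)|
            + |c/2 * (2 * (L:ℝ) + 2 - g)| := abs_add_le _ _
      _ ≤ 2 + ((dr:ℝ) + 2) := by
          have h2 : |c/2 * (2 * (L:ℝ) + 2 - g)| ≤ (dr:ℝ) + 2 := by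
            rw [abs_mul]
            have hc2 : |c/2| ≤ 1 := by
              rw [abs_of_nonneg (by linarith)]; linarith
            calc |c/2| * |2 * (L:ℝ) + 2 - g| ≤ 1 * ((dr:ℝ) + 2) :=
                  mul_le_mul hc2 habs2 (abs_nonneg _) zero_le_one
              _ = (dr:ℝ) + 2 := one_mul _
          linarith
  show ((fun g : ℕ => ∑ᶠ l ∈ {l : Polynomial Fq | l.Monic ∧ l.natDegree ≤ (g - dr) / 2},
        am (r * h * l) / pnorm l) - fun g : ℕ => c/2 * am (r * h) * (g:ℝ))
      =o[atTop] (fun g : ℕ => c/2 * am (r * h) * (g:ℝ))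
  rw [Asymptotics.isLittleO_iff]
  intro ε hε
  filter_upwards [eventually_ge_atTop (max 1 ⌈B / (ε * K)⌉₊)] with g hg
  have hg1 : 1 ≤ g := le_trans (le_max_left _ _) hg
  have hgc : (⌈B / (ε * K)⌉₊ : ℝ) ≤ (g:ℝ) := by
    exact_mod_cast le_trans (le_max_right _ _) hg
  have hgR : (1:ℝ) ≤ (g:ℝ) := by exact_mod_cast hg1
  have hBle : B ≤ ε * (K * g) := by
    have h1 : B / (ε * K) ≤ (g:ℝ) := le_trans (Nat.le_ceil _) hgc
    have h2 : 0 < ε * K := by positivity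
    rw [div_le_iff₀ h2] at h1
    nlinarith
  simp only [Pi.sub_apply]
  rw [Real.norm_eq_abs, Real.norm_eq_abs]
  have hGabs : |c/2 * am (r * h) * (g:ℝ)| = K * g := by
    rw [hK, abs_of_nonneg (by positivity)]
  rw [hGabs]
  exact le_trans (hbound g) hBle
end
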